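/- arXiv:1912.06975 — 9 statements merged into one kernel-verified Lean document; each statement's English description precedes it below -/
import Mathlib

section
/- Assume Condition (9), i.e., R_s/R_D2D < P_s/(P_Rx + P_Tx). Then the cost function C is submodular: for all coalitions S1, S2 ⊆ N, C(S1) + C(S2) ≥ C(S1 ∪ S2) + C(S1 ∩ S2). -/
open Finset

/-- The minimum total energy cost `C(S)` of a coalition `S`. -/
noncomputable def Ccost {α : Type*} [DecidableEq α]
    (Ps Rs PTx PRx RD2D : ℝ) (D S : Finset α) : ℝ :=
  if (S ∩ D) = ∅ then 0
  else if (S ∩ D).card = 1 then Ps / Rs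
  else Ps / Rs + PTx / RD2D + (((S ∩ D).card : ℝ) - 1) * (PRx / RD2D)


/-- Abstract one-variable cost function. -/
noncomputable def fcost (c t r : ℝ) : ℕ → ℝ
  | 0 => 0
  | 1 => c
  | (n+2) => c + t + ((n : ℝ) + 1) * r

lemma fcost_key (c t r : ℝ) (ht : 0 < t) (hr : 0 < r) (hc : t + r ≤ c) :
    ∀ i a b u : ℕ, i ≤ a → a ≤ u → b ≤ u → i ≤ b → a + b = u + i →
    fcost c t r a + fcost c t r b ≥ fcost c t r u + fcost c t r i := by
  intro i a b u h1 h2 h3 h4 h5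
  rcases i with _|_|i <;> rcases a with _|_|a <;> rcases b with _|_|b <;> rcases u with _|_|u <;>
    simp only [fcost] <;>
    first
      | (exfalso; omega)
      | linarith
      | (have h5' := congrArg (fun n : ℕ => (n : ℝ)) h5
         push_cast at h5'
         nlinarith [hr, ht, hc, h5'])

lemma Ccost_eq_fcost {α : Type*} [DecidableEq α]
    (Ps Rs PTx PRx RD2D : ℝ) (D S : Finset α) :
    Ccost Ps Rs PTx PRx RD2D D S
      = fcost (Ps / Rs) (PTx / RD2D) (PRx / RD2D) (S ∩ D).card := by
  unfold Ccost
  rcases h : (S ∩ D).card with _|_|n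
  · rw [Finset.card_eq_zero] at h
    simp [h, fcost]
  · have hne : S ∩ D ≠ ∅ := by
      intro he; rw [he] at h; simp at h
    simp [hne, fcost]
  · have hne : S ∩ D ≠ ∅ := by
      intro he; rw [he] at h; simp at h
    have h1 : (S ∩ D).card ≠ 1 := by omega
    simp only [if_neg hne, if_neg h1, h, fcost]
    push_cast
    ring

/-- under Condition (9), the cost function `C` is submodular:
`C(S1) + C(S2) ≥ C(S1 ∪ S2) + C(S1 ∩ S2)` for all coalitions `S1, S2`. -/
theorem Ccost_submodular
    {α : Type*} [Fintype α] [DecidableEq α]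
    (Ps Rs PTx PRx RD2D : ℝ)
    (hPs : 0 < Ps) (hRs : 0 < Rs) (hPTx : 0 < PTx) (hPRx : 0 < PRx)
    (hRD2D : 0 < RD2D)
    (h9 : Rs / RD2D < Ps / (PRx + PTx))
    (D : Finset α) (S1 S2 : Finset α) :
    Ccost Ps Rs PTx PRx RD2D D S1 + Ccost Ps Rs PTx PRx RD2D D S2 ≥
      Ccost Ps Rs PTx PRx RD2D D (S1 ∪ S2) + Ccost Ps Rs PTx PRx RD2D D (S1 ∩ S2) := by
  have ht : 0 < PTx / RD2D := div_pos hPTx hRD2D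
  have hr : 0 < PRx / RD2D := div_pos hPRx hRD2D
  have hc : PTx / RD2D + PRx / RD2D ≤ Ps / Rs := by
    rw [div_lt_div_iff₀ hRD2D (by positivity)] at h9
    rw [← add_div, div_le_div_iff₀ hRD2D hRs]
    nlinarith
  rw [Ccost_eq_fcost, Ccost_eq_fcost, Ccost_eq_fcost, Ccost_eq_fcost]
  have hU : (S1 ∪ S2) ∩ D = (S1 ∩ D) ∪ (S2 ∩ D) := Finset.union_inter_distrib_right _ _ _
  have hI : (S1 ∩ S2) ∩ D = (S1 ∩ D) ∩ (S2 ∩ D) := by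
    ext x; simp only [Finset.mem_inter]; tauto
  rw [hU, hI]
  apply fcost_key _ _ _ ht hr hc ((S1 ∩ D) ∩ (S2 ∩ D)).card (S1 ∩ D).card (S2 ∩ D).card
      ((S1 ∩ D) ∪ (S2 ∩ D)).card
  · exact Finset.card_le_card (Finset.inter_subset_left)
  · exact Finset.card_le_card (Finset.subset_union_left)
  · exact Finset.card_le_card (Finset.subset_union_right)
  · exact Finset.card_le_card (Finset.inter_subset_right)
  · rw [Finset.card_union_add_card_inter]
end

section
/- Assume Condition (9), i.e., R_s/R_D2D < P_s/(P_Rx + P_Tx). If S1, S2 ⊆ N are disjoint coalitions with S1 ∩ D ≠ ∅ and S2 ∩ D ≠ ∅, then C(S1) + C(S2) > C(S1 ∪ S2); that is, strictly less energy is expended when the two groups of requesting users cooperate in a single coalition than when they operate separately. -/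
open Finset

/-- under Condition (9), if `S1, S2` are disjoint coalitions each containing
at least one requesting user, then `C(S1) + C(S2) > C(S1 ∪ S2)`: strictly less energy is
expended when the two groups cooperate in a single coalition. -/
theorem Ccost_strict_merge_gain
    {α : Type*} [Fintype α] [DecidableEq α]
    (Ps Rs PTx PRx RD2D : ℝ)
    (hPs : 0 < Ps) (hRs : 0 < Rs) (hPTx : 0 < PTx) (hPRx : 0 < PRx)
    (hRD2D : 0 < RD2D)
    (h9 : Rs / RD2D < Ps / (PRx + PTx))
    (D : Finset α) (S1 S2 : Finset α)
    (hdisj : Disjoint S1 S2)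
    (h1 : (S1 ∩ D).Nonempty) (h2 : (S2 ∩ D).Nonempty) :
    Ccost Ps Rs PTx PRx RD2D D S1 + Ccost Ps Rs PTx PRx RD2D D S2 >
      Ccost Ps Rs PTx PRx RD2D D (S1 ∪ S2) := by
  have hkey : (PRx + PTx) / RD2D < Ps / Rs := by
    rw [div_lt_div_iff₀ hRD2D hRs]
    rw [div_lt_div_iff₀ hRD2D (by positivity)] at h9
    nlinarith
  have hdisj' : Disjoint (S1 ∩ D) (S2 ∩ D) :=
    hdisj.mono (inter_subset_left) (inter_subset_left)
  have hU : (S1 ∪ S2) ∩ D = (S1 ∩ D) ∪ (S2 ∩ D) := union_inter_distrib_right ..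
  have hcard : ((S1 ∪ S2) ∩ D).card = (S1 ∩ D).card + (S2 ∩ D).card := by
    rw [hU, card_union_of_disjoint hdisj']
  have h1c : 1 ≤ (S1 ∩ D).card := card_pos.mpr h1
  have h2c : 1 ≤ (S2 ∩ D).card := card_pos.mpr h2
  have hne1 : ¬ S1 ∩ D = ∅ := h1.ne_empty
  have hne2 : ¬ S2 ∩ D = ∅ := h2.ne_empty
  have hneU : ¬ (S1 ∪ S2) ∩ D = ∅ := by
    rw [hU]; exact (h1.mono subset_union_left).ne_empty
  have hcardU : ¬ ((S1 ∪ S2) ∩ D).card = 1 := by omega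
  unfold Ccost
  rw [if_neg hne1, if_neg hne2, if_neg hneU, if_neg hcardU, hcard]
  push_cast
  have hPRxd : 0 < PRx / RD2D := by positivity
  have hPTxd : 0 < PTx / RD2D := by positivity
  rcases Nat.lt_or_ge (S1 ∩ D).card 2 with hlt1 | hge1 <;>
    rcases Nat.lt_or_ge (S2 ∩ D).card 2 with hlt2 | hge2
  · have e1 : (S1 ∩ D).card = 1 := by omega
    have e2 : (S2 ∩ D).card = 1 := by omega
    rw [if_pos e1, if_pos e2, e1, e2]
    push_cast
    have : (PRx + PTx) / RD2D = PRx / RD2D + PTx / RD2D := add_div ..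
    nlinarith
  · have e1 : (S1 ∩ D).card = 1 := by omega
    rw [if_pos e1, if_neg (by omega), e1]
    push_cast
    have : (PRx + PTx) / RD2D = PRx / RD2D + PTx / RD2D := add_div ..
    nlinarith
  · have e2 : (S2 ∩ D).card = 1 := by omega
    rw [if_neg (by omega), if_pos e2, e2]
    push_cast
    have : (PRx + PTx) / RD2D = PRx / RD2D + PTx / RD2D := add_div ..
    nlinarith
  · rw [if_neg (by omega), if_neg (by omega)]
    have : (PRx + PTx) / RD2D = PRx / RD2D + PTx / RD2D := add_div ..
    nlinarith
end

section
/- Assume Condition (9), i.e., R_s/R_D2D < P_s/(P_Rx + P_Tx). Given valuations U : N → ℝ, define the value of a coalition S ⊆ N by v(S) = ∑_{i ∈ S∩D} U_i − C(S). Then v is supermodular (the game is convex): for all S1, S2 ⊆ N, v(S1) + v(S2) ≤ v(S1 ∪ S2) + v(S1 ∩ S2). -/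
open Finset

/-- The cost as a function of the number of destination nodes in the coalition. -/
noncomputable def gcost (Ps Rs PTx PRx RD2D : ℝ) : ℕ → ℝ := fun n =>
  if n = 0 then 0
  else if n = 1 then Ps / Rs
  else Ps / Rs + PTx / RD2D + ((n : ℝ) - 1) * (PRx / RD2D)

lemma Ccost_eq_gcost {α : Type*} [DecidableEq α]
    (Ps Rs PTx PRx RD2D : ℝ) (D S : Finset α) :
    Ccost Ps Rs PTx PRx RD2D D S = gcost Ps Rs PTx PRx RD2D (S ∩ D).card := by
  simp [Ccost, gcost, Finset.card_eq_zero]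

lemma gcost_step_le (Ps Rs PTx PRx RD2D : ℝ)
    (hRs : 0 < Rs) (hPTx : 0 < PTx) (hPRx : 0 < PRx) (hRD2D : 0 < RD2D)
    (hkey : PTx / RD2D + PRx / RD2D < Ps / Rs)
    (m n : ℕ) (hmn : m ≤ n) :
    gcost Ps Rs PTx PRx RD2D (n + 1) - gcost Ps Rs PTx PRx RD2D n ≤
      gcost Ps Rs PTx PRx RD2D (m + 1) - gcost Ps Rs PTx PRx RD2D m := by
  have hB : 0 < PRx / RD2D := div_pos hPRx hRD2D
  have hA2 : 0 < PTx / RD2D := div_pos hPTx hRD2D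
  obtain _|_|m := m <;> obtain _|_|n := n
  · exact le_rfl
  · simp only [gcost]; norm_num; linarith
  · simp only [gcost]; norm_num; push_cast; nlinarith
  · exact absurd hmn (by omega)
  · exact le_rfl
  · simp only [gcost]; norm_num; push_cast; nlinarith
  · exact absurd hmn (by omega)
  · exact absurd hmn (by omega)
  · simp only [gcost]; norm_num; push_cast; ring_nf; nlinarith

lemma gcost_diff_le (Ps Rs PTx PRx RD2D : ℝ)
    (hRs : 0 < Rs) (hPTx : 0 < PTx) (hPRx : 0 < PRx) (hRD2D : 0 < RD2D)
    (hkey : PTx / RD2D + PRx / RD2D < Ps / Rs)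
    (c b : ℕ) (hcb : c ≤ b) (d : ℕ) :
    gcost Ps Rs PTx PRx RD2D (b + d) - gcost Ps Rs PTx PRx RD2D b ≤
      gcost Ps Rs PTx PRx RD2D (c + d) - gcost Ps Rs PTx PRx RD2D c := by
  induction d with
  | zero => simp
  | succ d ih =>
    have hstep := gcost_step_le Ps Rs PTx PRx RD2D hRs hPTx hPRx hRD2D hkey
      (c + d) (b + d) (by omega)
    have h1 : b + (d + 1) = (b + d) + 1 := by omega
    have h2 : c + (d + 1) = (c + d) + 1 := by omega
    rw [h1, h2]
    linarith

/-- under Condition (9), the value function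
`v(S) = ∑_{i ∈ S ∩ D} U_i − C(S)` is supermodular (the game is convex). -/
theorem value_supermodular
    {α : Type*} [Fintype α] [DecidableEq α]
    (Ps Rs PTx PRx RD2D : ℝ)
    (hPs : 0 < Ps) (hRs : 0 < Rs) (hPTx : 0 < PTx) (hPRx : 0 < PRx)
    (hRD2D : 0 < RD2D)
    (h9 : Rs / RD2D < Ps / (PRx + PTx))
    (D : Finset α) (U : α → ℝ)
    (v : Finset α → ℝ)
    (hv : ∀ S : Finset α, v S = (∑ i ∈ S ∩ D, U i) - Ccost Ps Rs PTx PRx RD2D D S)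
    (S1 S2 : Finset α) :
    v S1 + v S2 ≤ v (S1 ∪ S2) + v (S1 ∩ S2) := by
  have hkey : PTx / RD2D + PRx / RD2D < Ps / Rs := by
    have h9' : Rs * (PRx + PTx) < Ps * RD2D :=
      (div_lt_div_iff₀ hRD2D (by linarith)).mp h9
    have heq : PTx / RD2D + PRx / RD2D = (PTx + PRx) / RD2D := by ring
    rw [heq, div_lt_div_iff₀ hRD2D hRs]
    nlinarith
  rw [hv S1, hv S2, hv (S1 ∪ S2), hv (S1 ∩ S2)]
  have hset1 : (S1 ∪ S2) ∩ D = (S1 ∩ D) ∪ (S2 ∩ D) := Finset.union_inter_distrib_right ..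
  have hset2 : (S1 ∩ S2) ∩ D = (S1 ∩ D) ∩ (S2 ∩ D) := by
    ext x; simp only [Finset.mem_inter]; tauto
  have hsum : (∑ i ∈ (S1 ∪ S2) ∩ D, U i) + (∑ i ∈ (S1 ∩ S2) ∩ D, U i)
      = (∑ i ∈ S1 ∩ D, U i) + (∑ i ∈ S2 ∩ D, U i) := by
    rw [hset1, hset2]
    exact Finset.sum_union_inter
  set a := (S1 ∩ D).card with ha
  set b := (S2 ∩ D).card with hb
  set u := ((S1 ∪ S2) ∩ D).card with hu
  set c := ((S1 ∩ S2) ∩ D).card with hc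
  have hcard : u + c = a + b := by
    rw [hu, hc, hset1, hset2]
    exact Finset.card_union_add_card_inter ..
  have hca : c ≤ a := by
    rw [hc, ha, hset2]
    exact Finset.card_le_card (Finset.inter_subset_left)
  have hcb : c ≤ b := by
    rw [hc, hb, hset2]
    exact Finset.card_le_card (Finset.inter_subset_right)
  have hcost : gcost Ps Rs PTx PRx RD2D u + gcost Ps Rs PTx PRx RD2D c
      ≤ gcost Ps Rs PTx PRx RD2D a + gcost Ps Rs PTx PRx RD2D b := by
    have hu' : u = b + (a - c) := by omega
    have ha' : a = c + (a - c) := by omega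
    have := gcost_diff_le Ps Rs PTx PRx RD2D hRs hPTx hPRx hRD2D hkey c b hcb (a - c)
    rw [← hu', ← ha'] at this
    linarith
  rw [Ccost_eq_gcost, Ccost_eq_gcost, Ccost_eq_gcost, Ccost_eq_gcost]
  rw [← ha, ← hb, ← hu, ← hc]
  linarith
end

section
/- Assume Condition (9), i.e., R_s/R_D2D < P_s/(P_Rx + P_Tx). Then the multi-file value function v(S) = ∑_{m=1}^M ( ∑_{i ∈ S ∩ D_m} U_{i,m} − a·X_m·C_m(S) ) is supermodular: for all coalitions S1, S2 ⊆ N, v(S1) + v(S2) ≤ v(S1 ∪ S2) + v(S1 ∩ S2). -/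
open Finset

/-- The cost as a function of the cardinality. -/
noncomputable def fseq (c b r : ℝ) : ℕ → ℝ
  | 0 => 0
  | 1 => c
  | (n+2) => c + b + n * r

lemma fseq_step (c b r : ℝ) (hcb : b ≤ c) (hbr : r ≤ b) :
    ∀ {x y : ℕ}, x ≤ y →
      fseq c b r (y+1) - fseq c b r y ≤ fseq c b r (x+1) - fseq c b r x := by
  have hd : ∀ n : ℕ, fseq c b r (n+1) - fseq c b r n =
      if n = 0 then c else if n = 1 then b else r := by
    intro n
    match n with
    | 0 => simp [fseq]
    | 1 => simp [fseq]
    | (k+2) => simp [fseq]; push_cast; ring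
  intro x y hxy
  rw [hd, hd]
  rcases Nat.eq_zero_or_pos x with hx | hx
  · subst hx
    simp only [if_pos rfl]
    split_ifs <;> linarith
  · have hx0 : x ≠ 0 := by omega
    have hy0 : y ≠ 0 := by omega
    rw [if_neg hx0, if_neg hy0]
    rcases eq_or_ne x 1 with hx1 | hx1
    · rw [if_pos hx1]; split_ifs <;> linarith
    · have hy1 : y ≠ 1 := by omega
      rw [if_neg hx1, if_neg hy1]

lemma fseq_diff (c b r : ℝ) (hcb : b ≤ c) (hbr : r ≤ b) :
    ∀ (d : ℕ) {x y : ℕ}, x ≤ y →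
      fseq c b r (y+d) - fseq c b r y ≤ fseq c b r (x+d) - fseq c b r x := by
  intro d
  induction d with
  | zero => intro x y _; simp
  | succ n ih =>
      intro x y hxy
      have h1 := ih hxy
      have h2 := fseq_step c b r hcb hbr (Nat.add_le_add_right hxy n)
      have e1 : x + (n+1) = (x + n) + 1 := by ring
      have e2 : y + (n+1) = (y + n) + 1 := by ring
      rw [e1, e2]
      linarith

lemma fseq_concave_four (c b r : ℝ) (hcb : b ≤ c) (hbr : r ≤ b)
    {k1 k2 ki ku : ℕ} (h1 : ki ≤ k1) (h2 : k1 ≤ ku) (h3 : ki + ku = k1 + k2) :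
    fseq c b r ku + fseq c b r ki ≤ fseq c b r k1 + fseq c b r k2 := by
  have hik2 : ki ≤ k2 := by omega
  have e1 : k1 = ki + (k1 - ki) := by omega
  have e2 : ku = k2 + (k1 - ki) := by omega
  have := fseq_diff c b r hcb hbr (k1 - ki) hik2
  rw [← e1, ← e2] at this
  linarith

lemma Ccost_eq_fseq {α : Type*} [DecidableEq α]
    (Ps Rs PTx PRx RD2D : ℝ) (D S : Finset α) :
    Ccost Ps Rs PTx PRx RD2D D S =
      fseq (Ps / Rs) ((PTx + PRx) / RD2D) (PRx / RD2D) ((S ∩ D).card) := by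
  unfold Ccost
  by_cases h0 : (S ∩ D) = ∅
  · rw [if_pos h0, h0]; simp [fseq]
  · rw [if_neg h0]
    by_cases h1 : (S ∩ D).card = 1
    · rw [if_pos h1, h1]; simp [fseq]
    · rw [if_neg h1]
      have hc : (S ∩ D).card ≠ 0 := by
        simpa [Finset.card_eq_zero] using h0
      obtain ⟨n, hn⟩ : ∃ n, (S ∩ D).card = n + 2 := ⟨(S ∩ D).card - 2, by omega⟩
      rw [hn]
      simp only [fseq]
      push_cast
      rw [add_div]
      ring

/-- under Condition (9), the multi-file value function
`v(S) = ∑_m ( ∑_{i ∈ S ∩ D_m} U_{i,m} − a·X_m·C_m(S) )` is supermodular. -/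
theorem multifile_value_supermodular
    {α : Type*} [Fintype α] [DecidableEq α]
    (Ps Rs PTx PRx RD2D : ℝ)
    (hPs : 0 < Ps) (hRs : 0 < Rs) (hPTx : 0 < PTx) (hPRx : 0 < PRx)
    (hRD2D : 0 < RD2D)
    (h9 : Rs / RD2D < Ps / (PRx + PTx))
    (M : ℕ) (X : Fin M → ℝ) (hX : ∀ m, 0 < X m)
    (Dm : Fin M → Finset α) (U : α → Fin M → ℝ)
    (a : ℝ) (ha : 0 < a)
    (v : Finset α → ℝ)
    (hv : ∀ S : Finset α,
      v S = ∑ m : Fin M,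
        ((∑ i ∈ S ∩ Dm m, U i m) - a * X m * Ccost Ps Rs PTx PRx RD2D (Dm m) S))
    (S1 S2 : Finset α) :
    v S1 + v S2 ≤ v (S1 ∪ S2) + v (S1 ∩ S2) := by
  -- condition (9) gives b ≤ c
  have hsum : 0 < PRx + PTx := by linarith
  have hcb : (PTx + PRx) / RD2D ≤ Ps / Rs := by
    rw [div_lt_div_iff₀ hRD2D hsum] at h9
    rw [div_le_div_iff₀ hRD2D hRs]
    nlinarith
  have hbr : PRx / RD2D ≤ (PTx + PRx) / RD2D := by
    gcongr
    linarith
  rw [hv, hv, hv, hv, ← Finset.sum_add_distrib, ← Finset.sum_add_distrib]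
  apply Finset.sum_le_sum
  intro m _
  set D := Dm m
  -- the linear part is modular
  have hUnion : (S1 ∪ S2) ∩ D = (S1 ∩ D) ∪ (S2 ∩ D) := Finset.union_inter_distrib_right ..
  have hInter : (S1 ∩ S2) ∩ D = (S1 ∩ D) ∩ (S2 ∩ D) := Finset.inter_inter_distrib_right ..
  have hlin : (∑ i ∈ S1 ∩ D, U i m) + (∑ i ∈ S2 ∩ D, U i m)
      = (∑ i ∈ (S1 ∪ S2) ∩ D, U i m) + (∑ i ∈ (S1 ∩ S2) ∩ D, U i m) := by
    rw [hUnion, hInter, Finset.sum_union_inter]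
  -- the cost part is submodular
  have hcard : ((S1 ∩ S2) ∩ D).card + ((S1 ∪ S2) ∩ D).card
      = (S1 ∩ D).card + (S2 ∩ D).card := by
    rw [hUnion, hInter, add_comm]
    exact Finset.card_union_add_card_inter ..
  have hle1 : ((S1 ∩ S2) ∩ D).card ≤ (S1 ∩ D).card := by
    apply Finset.card_le_card
    exact Finset.inter_subset_inter (Finset.inter_subset_left) le_rfl
  have hle2 : (S1 ∩ D).card ≤ ((S1 ∪ S2) ∩ D).card := by
    apply Finset.card_le_card
    exact Finset.inter_subset_inter (Finset.subset_union_left) le_rfl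
  have hcost : Ccost Ps Rs PTx PRx RD2D D (S1 ∪ S2) + Ccost Ps Rs PTx PRx RD2D D (S1 ∩ S2)
      ≤ Ccost Ps Rs PTx PRx RD2D D S1 + Ccost Ps Rs PTx PRx RD2D D S2 := by
    rw [Ccost_eq_fseq, Ccost_eq_fseq, Ccost_eq_fseq, Ccost_eq_fseq]
    exact fseq_concave_four _ _ _ hcb hbr hle1 hle2 hcard
  have haX : 0 ≤ a * X m := le_of_lt (mul_pos ha (hX m))
  nlinarith [mul_le_mul_of_nonneg_left hcost haX]
end

section
/- (Theorem 2.) A partition P = {P_1, …, P_n} of N is D_c-stable if and only if the following two conditions hold: (1) for every P-compatible collection {S_1, …, S_k}, v(S_1 ∪ ⋯ ∪ S_k) ≥ ∑_{i=1}^k v(S_i); and (2) for every P-incompatible coalition S, ∑_{j : S ∩ P_j ≠ ∅} v(S ∩ P_j) ≥ v(S). -/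
open Finset

variable {α : Type*} [Fintype α] [DecidableEq α]

/-- A partition of the player set `N`: a family of pairwise disjoint nonempty
subsets whose union is `N`. -/
def IsPartition (P : Finset (Finset α)) : Prop :=
  (∀ B ∈ P, B.Nonempty) ∧ (P : Set (Finset α)).PairwiseDisjoint id ∧
    P.sup id = Finset.univ

/-- A collection in `N`: a family of pairwise disjoint nonempty subsets of `N`. -/
def IsCollection (C : Finset (Finset α)) : Prop :=
  (∀ B ∈ C, B.Nonempty) ∧ (C : Set (Finset α)).PairwiseDisjoint id

/-- The value of a collection (or partition): the sum of the values of its blocks. -/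
def collVal (v : Finset α → ℝ) (C : Finset (Finset α)) : ℝ := ∑ B ∈ C, v B

/-- `S[P]`: the collection consisting of the nonempty sets among
`(S_1 ∪ ⋯ ∪ S_k) ∩ P_j`, for the blocks `P_j` of `P`. -/
def restrictColl (C P : Finset (Finset α)) : Finset (Finset α) :=
  (P.image fun Pj => C.sup id ∩ Pj).filter fun B => B.Nonempty

/-- `P` is `D_c`-stable: `v(S[P]) ≥ v(S)` for every collection `S` in `N`. -/
def DcStable (v : Finset α → ℝ) (P : Finset (Finset α)) : Prop :=
  ∀ C : Finset (Finset α), IsCollection C →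
    collVal v (restrictColl C P) ≥ collVal v C

/-- `P` is strictly `D_c`-stable: strict superadditivity for `P`-compatible
collections with at least two blocks, and strict gain from splitting any
`P`-incompatible coalition along `P`. -/
def StrictlyDcStable (v : Finset α → ℝ) (P : Finset (Finset α)) : Prop :=
  (∀ C : Finset (Finset α), IsCollection C → 2 ≤ C.card →
      (∃ Pj ∈ P, C.sup id ⊆ Pj) → v (C.sup id) > ∑ B ∈ C, v B) ∧
  (∀ S : Finset α, (∀ Pj ∈ P, ¬ S ⊆ Pj) →
      (∑ Pj ∈ P.filter fun Pj => (S ∩ Pj).Nonempty, v (S ∩ Pj)) > v S)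

section Aux
variable {α : Type*} [Fintype α] [DecidableEq α]

/-- Within a pairwise disjoint family, the map `X ↦ A ∩ X` is injective on those
`X` with nonempty intersection. -/
lemma disj_inter_inj {D : Finset (Finset α)}
    (hD : (D : Set (Finset α)).PairwiseDisjoint id) (A : Finset α)
    {X Y : Finset α} (hX : X ∈ D) (hY : Y ∈ D)
    (hne : (A ∩ X).Nonempty) (h : A ∩ X = A ∩ Y) : X = Y := by
  by_contra hxy
  have hd : Disjoint X Y := hD hX hY hxy
  have h2 : Disjoint (A ∩ X) (A ∩ X) := by
    nth_rewrite 2 [h]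
    exact hd.mono inter_subset_right inter_subset_right
  exact hne.ne_empty (by simpa using disjoint_self.mp h2)

lemma sum_filter_inter (v : Finset α → ℝ) (hv0 : v ∅ = 0)
    (D : Finset (Finset α)) (A : Finset α) :
    (∑ X ∈ D.filter fun X => (A ∩ X).Nonempty, v (A ∩ X)) = ∑ X ∈ D, v (A ∩ X) := by
  refine Finset.sum_subset (filter_subset _ _) fun X hX hnX => ?_
  have : A ∩ X = ∅ := by
    by_contra h
    exact hnX (mem_filter.mpr ⟨hX, nonempty_iff_ne_empty.mpr h⟩)
  rw [this, hv0]

lemma sum_restrict (v : Finset α → ℝ) (hv0 : v ∅ = 0)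
    {D : Finset (Finset α)} (hD : (D : Set (Finset α)).PairwiseDisjoint id)
    (A : Finset α) :
    (∑ B ∈ (D.image fun X => A ∩ X).filter (fun B => B.Nonempty), v B)
      = ∑ X ∈ D, v (A ∩ X) := by
  rw [Finset.filter_image, Finset.sum_image, sum_filter_inter v hv0]
  intro X hX Y hY h
  exact disj_inter_inj hD A (mem_filter.mp hX).1 (mem_filter.mp hY).1
    (mem_filter.mp hX).2 h

end Aux

/-- Theorem 2: a partition `P` of `N` is `D_c`-stable iff
(1) for every `P`-compatible collection `{S_1, …, S_k}`,
`v(S_1 ∪ ⋯ ∪ S_k) ≥ ∑_i v(S_i)`, and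
(2) for every `P`-incompatible coalition `S`,
`∑_{j : S ∩ P_j ≠ ∅} v(S ∩ P_j) ≥ v(S)`. -/
theorem dcStable_iff {α : Type*} [Fintype α] [DecidableEq α] [Nonempty α]
    (v : Finset α → ℝ) (hv0 : v ∅ = 0)
    (P : Finset (Finset α)) (hP : IsPartition P) :
    DcStable v P ↔
      ((∀ C : Finset (Finset α), IsCollection C →
          (∃ Pj ∈ P, C.sup id ⊆ Pj) → v (C.sup id) ≥ ∑ B ∈ C, v B) ∧
        (∀ S : Finset α, (∀ Pj ∈ P, ¬ S ⊆ Pj) →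
          (∑ Pj ∈ P.filter fun Pj => (S ∩ Pj).Nonempty, v (S ∩ Pj)) ≥ v S)) := by
  classical
  obtain ⟨hPne', hPd, hPu⟩ := hP
  have hPnonempty : P.Nonempty := by
    rcases Finset.eq_empty_or_nonempty P with h | h
    · exfalso
      have : (Finset.univ : Finset α) = ∅ := by
        rw [← hPu, h]; simp
      exact (Finset.univ_nonempty).ne_empty this
    · exact h
  constructor
  · -- forward
    intro h
    constructor
    · rintro C hC ⟨Pj, hPj, hsub⟩
      have key := h C hC
      by_cases hU : C.sup id = ∅
      · have hCe : C = ∅ := by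
          rw [Finset.eq_empty_iff_forall_notMem]
          intro B hB
          have hBsub : B ⊆ C.sup id := Finset.le_sup (f := id) hB
          rw [hU] at hBsub
          exact (hC.1 B hB).ne_empty (Finset.subset_empty.mp hBsub)
        simp [hCe, hU, hv0]
      · have hUne : (C.sup id).Nonempty := Finset.nonempty_iff_ne_empty.mpr hU
        have hres : restrictColl C P = {C.sup id} := by
          unfold restrictColl
          ext B
          simp only [mem_filter, mem_image, mem_singleton]
          constructor
          · rintro ⟨⟨Pk, hPk, rfl⟩, hne⟩
            rcases eq_or_ne Pk Pj with rfl | hne'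
            · exact inter_eq_left.mpr hsub
            · exfalso
              have hd : Disjoint Pj Pk := hPd hPj hPk hne'.symm
              have : C.sup id ∩ Pk ⊆ Pj ∩ Pk :=
                inter_subset_inter hsub (Finset.Subset.refl _)
              rw [Finset.disjoint_iff_inter_eq_empty.mp hd] at this
              exact hne.ne_empty (Finset.subset_empty.mp this)
          · rintro rfl
            exact ⟨⟨Pj, hPj, inter_eq_left.mpr hsub⟩, hUne⟩
        rw [hres] at key
        simpa [collVal] using key
    · intro S hS
      have hSne : S.Nonempty := by
        rw [Finset.nonempty_iff_ne_empty]
        rintro rfl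
        obtain ⟨Pj, hPj⟩ := hPnonempty
        exact hS Pj hPj (empty_subset _)
      have hCcoll : IsCollection ({S} : Finset (Finset α)) := by
        constructor
        · intro B hB; rw [mem_singleton] at hB; subst hB; exact hSne
        · simp
      have key := h {S} hCcoll
      unfold collVal restrictColl at key
      rw [Finset.sup_singleton] at key
      simp only [id] at key
      rw [sum_restrict v hv0 hPd S, ← sum_filter_inter v hv0 P S] at key
      simpa using key
  · -- backward
    rintro ⟨h1, h2⟩ C hC
    set U := C.sup id with hUdef
    have hCd := hC.2
    -- Step A
    have stepA : ∀ B ∈ C, v B ≤ ∑ Pj ∈ P, v (B ∩ Pj) := by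
      intro B hB
      by_cases hcomp : ∃ Pj ∈ P, B ⊆ Pj
      · obtain ⟨Pj0, hPj0, hsub⟩ := hcomp
        have heq : ∑ Pj ∈ P, v (B ∩ Pj) = v (B ∩ Pj0) := by
          refine Finset.sum_eq_single_of_mem Pj0 hPj0 fun Pk hPk hne => ?_
          have hd : Disjoint Pj0 Pk := hPd hPj0 hPk hne.symm
          have : B ∩ Pk ⊆ Pj0 ∩ Pk := inter_subset_inter hsub (Finset.Subset.refl _)
          rw [Finset.disjoint_iff_inter_eq_empty.mp hd] at this
          rw [Finset.subset_empty.mp this, hv0]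
        rw [heq, inter_eq_left.mpr hsub]
      · push_neg at hcomp
        have := h2 B hcomp
        rw [sum_filter_inter v hv0 P B] at this
        -- `this : ∑ Pj ∈ P, v (B ∩ Pj) ≥ v B`
        linarith
    -- Step C
    have stepC : ∀ Pj ∈ P, (∑ B ∈ C, v (B ∩ Pj)) ≤ v (U ∩ Pj) := by
      intro Pj hPj
      set Cj : Finset (Finset α) :=
        (C.filter fun B => (Pj ∩ B).Nonempty).image fun B => Pj ∩ B with hCjdef
      have hsum : (∑ B ∈ C, v (B ∩ Pj)) = ∑ T ∈ Cj, v T := by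
        rw [hCjdef, Finset.sum_image, sum_filter_inter v hv0 C Pj]
        · simp_rw [Finset.inter_comm Pj]
        · intro X hX Y hY h
          exact disj_inter_inj hCd Pj (mem_filter.mp hX).1 (mem_filter.mp hY).1
            (mem_filter.mp hX).2 h
      have hCjcoll : IsCollection Cj := by
        constructor
        · intro T hT
          rw [hCjdef] at hT
          obtain ⟨B, hB, rfl⟩ := Finset.mem_image.mp hT
          exact (mem_filter.mp hB).2
        · intro T1 hT1 T2 hT2 hne
          simp only [hCjdef, Finset.coe_image, Set.mem_image, Finset.mem_coe] at hT1 hT2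
          obtain ⟨B1, hB1, rfl⟩ := hT1
          obtain ⟨B2, hB2, rfl⟩ := hT2
          have hB12 : B1 ≠ B2 := by rintro rfl; exact hne rfl
          have hd : Disjoint B1 B2 :=
            hCd (Finset.mem_coe.mpr (mem_filter.mp hB1).1)
              (Finset.mem_coe.mpr (mem_filter.mp hB2).1) hB12
          exact (hd.mono inter_subset_right inter_subset_right :
            Disjoint (Pj ∩ B1) (Pj ∩ B2))
      have hCjsup : Cj.sup id = U ∩ Pj := by
        ext x
        simp only [Finset.mem_sup, hCjdef, mem_image, mem_filter, mem_inter, hUdef,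
          id_eq]
        constructor
        · rintro ⟨T, ⟨B, ⟨hB, -⟩, rfl⟩, hx⟩
          rw [mem_inter] at hx
          exact ⟨⟨B, hB, hx.2⟩, hx.1⟩
        · rintro ⟨hxU, hxPj⟩
          obtain ⟨B, hB, hxB⟩ := hxU
          exact ⟨Pj ∩ B, ⟨B, ⟨hB, ⟨x, mem_inter.mpr ⟨hxPj, hxB⟩⟩⟩, rfl⟩,
            mem_inter.mpr ⟨hxPj, hxB⟩⟩
      have hCjsub : Cj.sup id ⊆ Pj := by
        rw [hCjsup]; exact inter_subset_right
      have := h1 Cj hCjcoll ⟨Pj, hPj, hCjsub⟩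
      rw [hCjsup] at this
      rw [hsum]
      linarith
    -- chain
    have hres : collVal v (restrictColl C P) = ∑ Pj ∈ P, v (U ∩ Pj) := by
      unfold collVal restrictColl
      exact sum_restrict v hv0 hPd U
    rw [hres]
    calc collVal v C = ∑ B ∈ C, v B := rfl
      _ ≤ ∑ B ∈ C, ∑ Pj ∈ P, v (B ∩ Pj) := Finset.sum_le_sum stepA
      _ = ∑ Pj ∈ P, ∑ B ∈ C, v (B ∩ Pj) := Finset.sum_comm
      _ ≤ ∑ Pj ∈ P, v (U ∩ Pj) := Finset.sum_le_sum stepC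
end

section
/- (Proposition 1.) If P is a D_c-stable partition of N, then P attains the maximum value among all partitions of N: v(P) = max{ v(Q) : Q is a partition of N }, where the value of a partition is the sum of the values of its blocks. -/
open Finset

variable {α : Type*} [Fintype α] [DecidableEq α]

/-- Proposition 1: a `D_c`-stable partition `P` attains the maximum
value among all partitions of `N`. -/
theorem dcStable_attains_max {α : Type*} [Fintype α] [DecidableEq α] [Nonempty α]
    (v : Finset α → ℝ) (hv0 : v ∅ = 0)
    (P : Finset (Finset α)) (hP : IsPartition P) (hstab : DcStable v P) :
    IsGreatest { x : ℝ | ∃ Q : Finset (Finset α), IsPartition Q ∧ collVal v Q = x }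
      (collVal v P) := by
  constructor
  · exact ⟨P, hP, rfl⟩
  · rintro x ⟨Q, hQ, rfl⟩
    have hQcoll : IsCollection Q := ⟨hQ.1, hQ.2.1⟩
    have hrestr : restrictColl Q P = P := by
      unfold restrictColl
      rw [hQ.2.2]
      have himg : (P.image fun Pj => (Finset.univ : Finset α) ∩ Pj) = P := by
        rw [show (fun Pj => (Finset.univ : Finset α) ∩ Pj) = id from
          funext fun Pj => Finset.univ_inter Pj, Finset.image_id]
      rw [himg, Finset.filter_true_of_mem fun B hB => hP.1 B hB]
    have := hstab Q hQcoll
    rwa [hrestr] at this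
end

section
/- If P is a strictly D_c-stable partition of N, then P is the strict maximizer of value among all partitions of N: for every partition Q of N with Q ≠ P, v(Q) < v(P), where the value of a partition is the sum of the values of its blocks. -/
open Finset

variable {α : Type*} [Fintype α] [DecidableEq α]

/-- a strictly `D_c`-stable partition `P` is the strict maximizer of
value among all partitions of `N`: every other partition has strictly smaller value. -/
theorem strictlyDcStable_strict_max {α : Type*} [Fintype α] [DecidableEq α] [Nonempty α]
    (v : Finset α → ℝ) (hv0 : v ∅ = 0)
    (P : Finset (Finset α)) (hP : IsPartition P) (hstab : StrictlyDcStable v P) :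
    ∀ Q : Finset (Finset α), IsPartition Q → Q ≠ P →
      collVal v Q < collVal v P := by
  intro Q hQ hne
  obtain ⟨hQne, hQdisj, hQsup⟩ := hQ
  obtain ⟨hPne, hPdisj, hPsup⟩ := hP
  have hzero : ∀ S Pj : Finset α, ¬(S ∩ Pj).Nonempty → v (S ∩ Pj) = 0 := by
    intro S Pj h
    rw [Finset.not_nonempty_iff_eq_empty.mp h, hv0]
  have hfiltersumP : ∀ S : Finset α,
      (∑ Pj ∈ P.filter fun Pj => (S ∩ Pj).Nonempty, v (S ∩ Pj)) =
        ∑ Pj ∈ P, v (S ∩ Pj) := by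
    intro S
    rw [Finset.sum_filter]
    refine Finset.sum_congr rfl fun Pj _ => ?_
    split_ifs with h
    · rfl
    · exact (hzero S Pj h).symm
  have hfiltersumQ : ∀ Pj : Finset α,
      (∑ S ∈ Q.filter fun S => (S ∩ Pj).Nonempty, v (S ∩ Pj)) =
        ∑ S ∈ Q, v (S ∩ Pj) := by
    intro Pj
    rw [Finset.sum_filter]
    refine Finset.sum_congr rfl fun S _ => ?_
    split_ifs with h
    · rfl
    · exact (hzero S Pj h).symm
  -- Step A: compatible blocks give equality
  have hAeq : ∀ S ∈ Q, (∃ Pj ∈ P, S ⊆ Pj) → v S = ∑ Pj ∈ P, v (S ∩ Pj) := by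
    intro S hS ⟨Pj0, hPj0, hsub⟩
    have hsum : ∑ Pj ∈ P, v (S ∩ Pj) = v (S ∩ Pj0) := by
      refine Finset.sum_eq_single Pj0 (fun Pj hPj hne' => ?_) (fun h' => absurd hPj0 h')
      have hdisj : Disjoint Pj Pj0 := hPdisj hPj hPj0 hne'
      have : S ∩ Pj = ∅ := by
        rw [Finset.eq_empty_iff_forall_notMem]
        intro x hx
        obtain ⟨hxS, hxPj⟩ := Finset.mem_inter.mp hx
        exact (Finset.disjoint_left.mp hdisj) hxPj (hsub hxS)
      rw [this, hv0]
    rw [hsum, Finset.inter_eq_left.mpr hsub]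
  have hAlt : ∀ S ∈ Q, (∀ Pj ∈ P, ¬ S ⊆ Pj) → v S < ∑ Pj ∈ P, v (S ∩ Pj) := by
    intro S _ h
    have := hstab.2 S h
    rw [hfiltersumP S] at this
    exact this
  have hAle : ∀ S ∈ Q, v S ≤ ∑ Pj ∈ P, v (S ∩ Pj) := by
    intro S hS
    by_cases h : ∃ Pj ∈ P, S ⊆ Pj
    · exact le_of_eq (hAeq S hS h)
    · push_neg at h
      exact le_of_lt (hAlt S hS h)
  -- Step B
  have hB : ∀ Pj ∈ P, (∑ S ∈ Q, v (S ∩ Pj)) ≤ v Pj ∧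
      (2 ≤ (Q.filter fun S => (S ∩ Pj).Nonempty).card →
        (∑ S ∈ Q, v (S ∩ Pj)) < v Pj) := by
    intro Pj hPj
    set F := Q.filter fun S => (S ∩ Pj).Nonempty with hF
    set C := F.image fun S => S ∩ Pj with hC
    have hFQ : ∀ S ∈ F, S ∈ Q ∧ (S ∩ Pj).Nonempty := fun S hS => Finset.mem_filter.mp hS
    have hinj : ∀ S1 ∈ F, ∀ S2 ∈ F, S1 ∩ Pj = S2 ∩ Pj → S1 = S2 := by
      intro S1 h1 S2 h2 heq
      by_contra hne'
      have hdisj : Disjoint S1 S2 := hQdisj (hFQ S1 h1).1 (hFQ S2 h2).1 hne'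
      have hdisj2 : Disjoint (S1 ∩ Pj) (S2 ∩ Pj) :=
        hdisj.mono Finset.inter_subset_left Finset.inter_subset_left
      rw [heq, disjoint_self] at hdisj2
      exact (hFQ S2 h2).2.ne_empty hdisj2
    have hsumC : ∑ B ∈ C, v B = ∑ S ∈ Q, v (S ∩ Pj) := by
      rw [hC, Finset.sum_image hinj, hfiltersumQ Pj]
    have hcardC : C.card = F.card := Finset.card_image_of_injOn hinj
    have hcoll : IsCollection C := by
      constructor
      · intro B hB
        obtain ⟨S, hS, rfl⟩ := Finset.mem_image.mp hB
        exact (hFQ S hS).2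
      · intro B1 h1 B2 h2 hne'
        obtain ⟨S1, hS1, rfl⟩ := Finset.mem_image.mp h1
        obtain ⟨S2, hS2, rfl⟩ := Finset.mem_image.mp h2
        have : S1 ≠ S2 := fun h => hne' (by rw [h])
        exact (hQdisj (hFQ S1 hS1).1 (hFQ S2 hS2).1 this).mono
          Finset.inter_subset_left Finset.inter_subset_left
    have hsup : C.sup id = Pj := by
      apply Finset.Subset.antisymm
      · intro x hx
        obtain ⟨B, hB, hxB⟩ := Finset.mem_sup.mp hx
        obtain ⟨S, _, rfl⟩ := Finset.mem_image.mp hB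
        exact (Finset.mem_inter.mp hxB).2
      · intro x hx
        have hx' : x ∈ Q.sup id := by rw [hQsup]; exact Finset.mem_univ x
        obtain ⟨S, hS, hxS⟩ := Finset.mem_sup.mp hx'
        have hSF : S ∈ F := Finset.mem_filter.mpr ⟨hS, ⟨x, Finset.mem_inter.mpr ⟨hxS, hx⟩⟩⟩
        exact Finset.mem_sup.mpr ⟨S ∩ Pj, Finset.mem_image_of_mem _ hSF,
          Finset.mem_inter.mpr ⟨hxS, hx⟩⟩
    have hCne : C.Nonempty := by
      obtain ⟨x, hx⟩ := hPne Pj hPj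
      have : x ∈ C.sup id := by rw [hsup]; exact hx
      obtain ⟨B, hB, _⟩ := Finset.mem_sup.mp this
      exact ⟨B, hB⟩
    by_cases h2 : 2 ≤ C.card
    · have := hstab.1 C hcoll h2 ⟨Pj, hPj, by rw [hsup]⟩
      rw [hsup, hsumC] at this
      exact ⟨le_of_lt this, fun _ => this⟩
    · have hc1 : C.card = 1 := by
        have := Finset.card_pos.mpr hCne
        omega
      obtain ⟨B, hB⟩ := Finset.card_eq_one.mp hc1
      have hBPj : B = Pj := by rw [← hsup, hB, Finset.sup_singleton]; rfl
      have heq : ∑ S ∈ Q, v (S ∩ Pj) = v Pj := by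
        rw [← hsumC, hB, Finset.sum_singleton, hBPj]
      refine ⟨le_of_eq heq, fun h2' => absurd ?_ h2⟩
      rw [hcardC]; exact h2'
  -- combine
  have hswap : (∑ S ∈ Q, ∑ Pj ∈ P, v (S ∩ Pj)) = ∑ Pj ∈ P, ∑ S ∈ Q, v (S ∩ Pj) :=
    Finset.sum_comm
  by_cases hc : ∃ S ∈ Q, ∀ Pj ∈ P, ¬ S ⊆ Pj
  · obtain ⟨S0, hS0, hS0inc⟩ := hc
    calc collVal v Q < ∑ S ∈ Q, ∑ Pj ∈ P, v (S ∩ Pj) :=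
          Finset.sum_lt_sum hAle ⟨S0, hS0, hAlt S0 hS0 hS0inc⟩
      _ = ∑ Pj ∈ P, ∑ S ∈ Q, v (S ∩ Pj) := hswap
      _ ≤ collVal v P := Finset.sum_le_sum fun Pj hPj => (hB Pj hPj).1
  · push_neg at hc
    -- every block of Q is compatible; find a Pj meeting ≥ 2 blocks of Q
    have hsplit : ∃ Pj ∈ P, 2 ≤ (Q.filter fun S => (S ∩ Pj).Nonempty).card := by
      by_contra hno
      push_neg at hno
      -- then Q = P, contradiction
      apply hne
      have hPQ : P ⊆ Q := by
        intro Pj hPj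
        obtain ⟨x, hx⟩ := hPne Pj hPj
        have hx' : x ∈ Q.sup id := by rw [hQsup]; exact Finset.mem_univ x
        obtain ⟨S, hS, hxS⟩ := Finset.mem_sup.mp hx'
        have hSF : S ∈ Q.filter fun S => (S ∩ Pj).Nonempty :=
          Finset.mem_filter.mpr ⟨hS, ⟨x, Finset.mem_inter.mpr ⟨hxS, hx⟩⟩⟩
        have hle1 : (Q.filter fun S => (S ∩ Pj).Nonempty).card ≤ 1 := by
          have := hno Pj hPj; omega
        have huniq := Finset.card_le_one.mp hle1
        -- Pj ⊆ S
        have hPjS : Pj ⊆ S := by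
          intro y hy
          have hy' : y ∈ Q.sup id := by rw [hQsup]; exact Finset.mem_univ y
          obtain ⟨S', hS', hyS'⟩ := Finset.mem_sup.mp hy'
          have hS'F : S' ∈ Q.filter fun S => (S ∩ Pj).Nonempty :=
            Finset.mem_filter.mpr ⟨hS', ⟨y, Finset.mem_inter.mpr ⟨hyS', hy⟩⟩⟩
          rw [← huniq S' hS'F S hSF]
          exact hyS'
        obtain ⟨Pj', hPj', hSPj'⟩ := hc S hS
        have hPjPj' : Pj = Pj' := by
          by_contra hne'
          exact (Finset.disjoint_left.mp (hPdisj hPj hPj' hne')) hx (hSPj' (hPjS hx))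
        have : S = Pj := Finset.Subset.antisymm (hPjPj' ▸ hSPj') hPjS
        rwa [← this]
      apply Finset.Subset.antisymm _ hPQ
      intro S hS
      obtain ⟨x, hx⟩ := hQne S hS
      have hx' : x ∈ P.sup id := by rw [hPsup]; exact Finset.mem_univ x
      obtain ⟨Pj, hPj, hxPj⟩ := Finset.mem_sup.mp hx'
      have hPjQ : Pj ∈ Q := hPQ hPj
      have : S = Pj := by
        by_contra hne'
        exact (Finset.disjoint_left.mp (hQdisj hS hPjQ hne')) hx hxPj
      rwa [this]
    obtain ⟨Pj0, hPj0, h2⟩ := hsplit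
    calc collVal v Q ≤ ∑ S ∈ Q, ∑ Pj ∈ P, v (S ∩ Pj) := Finset.sum_le_sum hAle
      _ = ∑ Pj ∈ P, ∑ S ∈ Q, v (S ∩ Pj) := hswap
      _ < collVal v P := Finset.sum_lt_sum (fun Pj hPj => (hB Pj hPj).1)
          ⟨Pj0, hPj0, (hB Pj0 hPj0).2 h2⟩
end

section
/- (Uniqueness part of Theorem on merge-and-split.) If P is a strictly D_c-stable partition of N, then P is the unique D_c-stable partition of N: P is D_c-stable, and any D_c-stable partition Q of N satisfies Q = P. -/
open Finset

variable {α : Type*} [Fintype α] [DecidableEq α]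

/-- Two blocks of a pairwise disjoint family sharing a point are equal. -/
lemma blockEq_of_mem {C : Finset (Finset α)}
    (hC : (C : Set (Finset α)).PairwiseDisjoint id) {B B' : Finset α}
    (hB : B ∈ C) (hB' : B' ∈ C) {x : α} (hx : x ∈ B) (hx' : x ∈ B') : B = B' := by
  by_contra h
  exact (Finset.disjoint_left.mp (hC (Finset.mem_coe.mpr hB) (Finset.mem_coe.mpr hB') h) hx) hx'

lemma sum_filter_nonempty (v : Finset α → ℝ) (hv0 : v ∅ = 0)
    (s : Finset (Finset α)) (f : Finset α → Finset α) :
    ∑ B ∈ s.filter (fun B => (f B).Nonempty), v (f B) = ∑ B ∈ s, v (f B) := by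
  rw [Finset.sum_filter]
  refine Finset.sum_congr rfl fun B _ => ?_
  by_cases h : (f B).Nonempty
  · simp [h]
  · simp [h, Finset.not_nonempty_iff_eq_empty.mp h, hv0]

lemma collVal_restrict (v : Finset α → ℝ) (hv0 : v ∅ = 0)
    {P : Finset (Finset α)} (hPd : (P : Set (Finset α)).PairwiseDisjoint id)
    (C : Finset (Finset α)) :
    collVal v (restrictColl C P) = ∑ Pj ∈ P, v (C.sup id ∩ Pj) := by
  unfold collVal restrictColl
  rw [Finset.filter_image, Finset.sum_image, sum_filter_nonempty v hv0]
  intro Pj hPj Pk hPk h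
  obtain ⟨x, hx⟩ := (Finset.mem_filter.mp hPj).2
  have hx' : x ∈ C.sup id ∩ Pk := (show C.sup id ∩ Pj = C.sup id ∩ Pk from h) ▸ hx
  exact blockEq_of_mem hPd (Finset.mem_filter.mp hPj).1 (Finset.mem_filter.mp hPk).1
    (Finset.mem_inter.mp hx).2 (Finset.mem_inter.mp hx').2

/-- Splitting one block along the partition: value does not decrease, and strictly
increases if the block is `P`-incompatible. -/
lemma split_le (v : Finset α → ℝ) (hv0 : v ∅ = 0)
    {P : Finset (Finset α)} (hP : IsPartition P) (hstab : StrictlyDcStable v P)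
    {B : Finset α} (hB : B.Nonempty) :
    v B ≤ ∑ Pj ∈ P, v (B ∩ Pj) ∧
      ((∀ Pj ∈ P, ¬ B ⊆ Pj) → v B < ∑ Pj ∈ P, v (B ∩ Pj)) := by
  have hstrict : (∀ Pj ∈ P, ¬ B ⊆ Pj) → v B < ∑ Pj ∈ P, v (B ∩ Pj) := by
    intro h
    have := hstab.2 B h
    rwa [sum_filter_nonempty v hv0] at this
  refine ⟨?_, hstrict⟩
  by_cases hcomp : ∃ Pj ∈ P, B ⊆ Pj
  · obtain ⟨Pj, hPj, hBPj⟩ := hcomp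
    have : ∑ Pk ∈ P, v (B ∩ Pk) = v B := by
      rw [Finset.sum_eq_single_of_mem Pj hPj, Finset.inter_eq_left.mpr hBPj]
      intro Pk hPk hne
      have hempty : B ∩ Pk = ∅ := by
        rw [Finset.eq_empty_iff_forall_notMem]
        intro x hx
        exact (Finset.disjoint_left.mp
          (hP.2.1 (Finset.mem_coe.mpr hPj) (Finset.mem_coe.mpr hPk) (Ne.symm hne))
          (hBPj (Finset.mem_inter.mp hx).1)) (Finset.mem_inter.mp hx).2
      rw [hempty, hv0]
    exact this.ge
  · push_neg at hcomp
    exact (hstrict hcomp).le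

/-- Merging the pieces inside one block of `P`: value does not decrease, and
strictly increases if at least two blocks of the collection meet `Pj`. -/
lemma merge_le (v : Finset α → ℝ) (hv0 : v ∅ = 0)
    {P : Finset (Finset α)} {Pj : Finset α} (hPj : Pj ∈ P)
    (hstab : StrictlyDcStable v P)
    {C : Finset (Finset α)} (hC : IsCollection C) :
    ∑ B ∈ C, v (B ∩ Pj) ≤ v (C.sup id ∩ Pj) ∧
      (2 ≤ (C.filter fun B => (B ∩ Pj).Nonempty).card →
        ∑ B ∈ C, v (B ∩ Pj) < v (C.sup id ∩ Pj)) := by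
  set T : Finset (Finset α) := C.filter fun B => (B ∩ Pj).Nonempty with hT
  have hsum : ∑ B ∈ C, v (B ∩ Pj) = ∑ B ∈ T, v (B ∩ Pj) :=
    (sum_filter_nonempty v hv0 C (fun B => B ∩ Pj)).symm
  have hsup : T.sup (fun B => B ∩ Pj) = C.sup id ∩ Pj := by
    have h1 : C.sup id ∩ Pj = C.sup fun B => id B ∩ Pj :=
      Finset.sup_inf_distrib_right C id Pj
    rw [h1]
    apply le_antisymm
    · exact Finset.sup_mono (Finset.filter_subset _ _)
    · apply Finset.sup_le
      intro B hB
      show B ∩ Pj ≤ T.sup fun B => B ∩ Pj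
      by_cases h : (B ∩ Pj).Nonempty
      · exact Finset.le_sup (f := fun B => B ∩ Pj) (Finset.mem_filter.mpr ⟨hB, h⟩)
      · rw [Finset.not_nonempty_iff_eq_empty.mp h]
        exact bot_le
  rcases Nat.lt_or_ge T.card 2 with h2 | h2
  · have heq : ∑ B ∈ C, v (B ∩ Pj) = v (C.sup id ∩ Pj) := by
      interval_cases h : T.card
      · have hTe : T = ∅ := Finset.card_eq_zero.mp h
        rw [hsum, hTe, ← hsup, hTe]
        simp [hv0]
      · obtain ⟨B, hBe⟩ := Finset.card_eq_one.mp h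
        rw [hsum, hBe, ← hsup, hBe]
        simp
    exact ⟨heq.le, fun hc => absurd hc (by omega)⟩
  · have hinj : Set.InjOn (fun B => B ∩ Pj) ↑T := by
      intro B hB B' hB' h
      have h' : B ∩ Pj = B' ∩ Pj := h
      obtain ⟨x, hx⟩ := (Finset.mem_filter.mp (Finset.mem_coe.mp hB)).2
      have hx' : x ∈ B' ∩ Pj := h' ▸ hx
      exact blockEq_of_mem hC.2 (Finset.mem_filter.mp (Finset.mem_coe.mp hB)).1
        (Finset.mem_filter.mp (Finset.mem_coe.mp hB')).1
        (Finset.mem_inter.mp hx).1 (Finset.mem_inter.mp hx').1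
    set D : Finset (Finset α) := T.image fun B => B ∩ Pj with hD
    have hDcard : D.card = T.card := Finset.card_image_of_injOn hinj
    have hDsup : D.sup id = C.sup id ∩ Pj := by
      rw [hD, Finset.sup_image]
      exact hsup
    have hDcoll : IsCollection D := by
      constructor
      · intro S hS
        obtain ⟨B, hB, rfl⟩ := Finset.mem_image.mp hS
        exact (Finset.mem_filter.mp hB).2
      · intro S hS S' hS' hne
        obtain ⟨B, hB, rfl⟩ := Finset.mem_image.mp (Finset.mem_coe.mp hS)
        obtain ⟨B', hB', rfl⟩ := Finset.mem_image.mp (Finset.mem_coe.mp hS')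
        have hBne : B ≠ B' := fun h => hne (by rw [h])
        have hdisj : Disjoint B B' :=
          hC.2 (Finset.mem_coe.mpr (Finset.mem_filter.mp hB).1)
            (Finset.mem_coe.mpr (Finset.mem_filter.mp hB').1) hBne
        exact Disjoint.mono Finset.inter_subset_left Finset.inter_subset_left hdisj
    have hDsub : ∃ Pk ∈ P, D.sup id ⊆ Pk :=
      ⟨Pj, hPj, by rw [hDsup]; exact Finset.inter_subset_right⟩
    have hgt := hstab.1 D hDcoll (by omega) hDsub
    have hsumD : ∑ S ∈ D, v S = ∑ B ∈ T, v (B ∩ Pj) := by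
      rw [hD]
      exact Finset.sum_image fun B hB B' hB' h => hinj (Finset.mem_coe.mpr hB) (Finset.mem_coe.mpr hB') h
    rw [hDsup, hsumD] at hgt
    rw [hsum]
    exact ⟨hgt.le, fun _ => hgt⟩

/-- The main inequality: restricting any collection to `P` does not decrease the
value, strictly if some block is incompatible or some `P`-block meets two blocks. -/
lemma main_ineq (v : Finset α → ℝ) (hv0 : v ∅ = 0)
    {P : Finset (Finset α)} (hP : IsPartition P) (hstab : StrictlyDcStable v P)
    {C : Finset (Finset α)} (hC : IsCollection C) :
    collVal v C ≤ ∑ Pj ∈ P, v (C.sup id ∩ Pj) ∧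
      (((∃ B ∈ C, ∀ Pj ∈ P, ¬ B ⊆ Pj) ∨
          (∃ Pj ∈ P, 2 ≤ (C.filter fun B => (B ∩ Pj).Nonempty).card)) →
        collVal v C < ∑ Pj ∈ P, v (C.sup id ∩ Pj)) := by
  have hstep1 : ∀ B ∈ C, v B ≤ ∑ Pj ∈ P, v (B ∩ Pj) :=
    fun B hB => (split_le v hv0 hP hstab (hC.1 B hB)).1
  have hswap : ∑ B ∈ C, ∑ Pj ∈ P, v (B ∩ Pj) = ∑ Pj ∈ P, ∑ B ∈ C, v (B ∩ Pj) :=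
    Finset.sum_comm
  have hstep2 : ∀ Pj ∈ P, ∑ B ∈ C, v (B ∩ Pj) ≤ v (C.sup id ∩ Pj) :=
    fun Pj hPj => (merge_le v hv0 hPj hstab hC).1
  have h1 : collVal v C ≤ ∑ B ∈ C, ∑ Pj ∈ P, v (B ∩ Pj) :=
    Finset.sum_le_sum hstep1
  have h2 : ∑ Pj ∈ P, ∑ B ∈ C, v (B ∩ Pj) ≤ ∑ Pj ∈ P, v (C.sup id ∩ Pj) :=
    Finset.sum_le_sum hstep2
  refine ⟨by linarith [hswap], ?_⟩
  rintro (⟨B, hB, hBinc⟩ | ⟨Pj, hPj, hPjc⟩)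
  · have h1' : collVal v C < ∑ B ∈ C, ∑ Pj ∈ P, v (B ∩ Pj) :=
      Finset.sum_lt_sum hstep1 ⟨B, hB, (split_le v hv0 hP hstab (hC.1 B hB)).2 hBinc⟩
    linarith [hswap]
  · have h2' : ∑ Pj ∈ P, ∑ B ∈ C, v (B ∩ Pj) < ∑ Pj ∈ P, v (C.sup id ∩ Pj) :=
      Finset.sum_lt_sum hstep2 ⟨Pj, hPj, (merge_le v hv0 hPj hstab hC).2 hPjc⟩
    linarith [hswap]

/-- If every block of `Q` lies in a block of `P` and each block of `P` meets at
most one block of `Q`, then the partitions coincide. -/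
lemma partition_eq_of_fine {P Q : Finset (Finset α)}
    (hP : IsPartition P) (hQ : IsPartition Q)
    (hcomp : ∀ B ∈ Q, ∃ Pj ∈ P, B ⊆ Pj)
    (hcard : ∀ Pj ∈ P, (Q.filter fun B => (B ∩ Pj).Nonempty).card ≤ 1) : Q = P := by
  have key : ∀ Pj ∈ P, Pj ∈ Q := by
    intro Pj hPj
    obtain ⟨x, hx⟩ := hP.1 Pj hPj
    have hxU : x ∈ Q.sup id := by rw [hQ.2.2]; exact Finset.mem_univ x
    obtain ⟨B, hB, hxB⟩ := Finset.mem_sup.mp hxU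
    obtain ⟨Pk, hPk, hBPk⟩ := hcomp B hB
    have hPjPk : Pj = Pk := blockEq_of_mem hP.2.1 hPj hPk hx (hBPk hxB)
    have hBPj : B ⊆ Pj := hPjPk ▸ hBPk
    have hBT : B ∈ Q.filter fun B => (B ∩ Pj).Nonempty :=
      Finset.mem_filter.mpr ⟨hB, ⟨x, Finset.mem_inter.mpr ⟨hxB, hx⟩⟩⟩
    have hPjB : Pj ⊆ B := by
      intro y hy
      have hyU : y ∈ Q.sup id := by rw [hQ.2.2]; exact Finset.mem_univ y
      obtain ⟨B', hB', hyB'⟩ := Finset.mem_sup.mp hyU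
      have hB'T : B' ∈ Q.filter fun B => (B ∩ Pj).Nonempty :=
        Finset.mem_filter.mpr ⟨hB', ⟨y, Finset.mem_inter.mpr ⟨hyB', hy⟩⟩⟩
      have : B' = B := Finset.card_le_one.mp (hcard Pj hPj) _ hB'T _ hBT
      exact this ▸ hyB'
    have : Pj = B := Finset.Subset.antisymm hPjB hBPj
    exact this ▸ hB
  apply Finset.Subset.antisymm
  · intro B hB
    obtain ⟨Pj, hPj, hBPj⟩ := hcomp B hB
    obtain ⟨x, hxB⟩ := hQ.1 B hB
    have : B = Pj := blockEq_of_mem hQ.2.1 hB (key Pj hPj) hxB (hBPj hxB)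
    exact this ▸ hPj
  · intro Pj hPj
    exact key Pj hPj

/-- a strictly `D_c`-stable partition `P` is the unique `D_c`-stable
partition of `N`: `P` is `D_c`-stable and any `D_c`-stable partition equals `P`. -/
theorem strictlyDcStable_unique {α : Type*} [Fintype α] [DecidableEq α] [Nonempty α]
    (v : Finset α → ℝ) (hv0 : v ∅ = 0)
    (P : Finset (Finset α)) (hP : IsPartition P) (hstab : StrictlyDcStable v P) :
    DcStable v P ∧
      ∀ Q : Finset (Finset α), IsPartition Q → DcStable v Q → Q = P := by
  constructor
  · intro C hC
    rw [ge_iff_le, collVal_restrict v hv0 hP.2.1]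
    exact (main_ineq v hv0 hP hstab hC).1
  · intro Q hQ hQst
    by_contra hne
    -- From `Q`'s stability applied to the collection `P`: v(P[Q]) ≥ v(P), and P[Q] = Q.
    have hr : restrictColl P Q = Q := by
      unfold restrictColl
      rw [hP.2.2]
      have himg : (Q.image fun Qj => (Finset.univ : Finset α) ∩ Qj) = Q := by
        rw [show (fun Qj => (Finset.univ : Finset α) ∩ Qj) = id from
          funext fun s => Finset.univ_inter s, Finset.image_id]
      rw [himg, Finset.filter_true_of_mem hQ.1]
    have hQP : collVal v P ≤ collVal v Q := by
      have := hQst P ⟨hP.1, hP.2.1⟩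
      rwa [hr] at this
    -- From strict stability of `P`: v(Q) < v(P).
    have hdisj : (∃ B ∈ Q, ∀ Pj ∈ P, ¬ B ⊆ Pj) ∨
        (∃ Pj ∈ P, 2 ≤ (Q.filter fun B => (B ∩ Pj).Nonempty).card) := by
      by_contra h
      push_neg at h
      obtain ⟨h1, h2⟩ := h
      refine hne (partition_eq_of_fine hP hQ ?_ ?_)
      · intro B hB
        obtain ⟨Pj, hPj, hBPj⟩ := h1 B hB
        exact ⟨Pj, hPj, hBPj⟩
      · intro Pj hPj
        have := h2 Pj hPj
        omega
    have hlt : collVal v Q < collVal v P := by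
      have := (main_ineq v hv0 hP hstab ⟨hQ.1, hQ.2.1⟩).2 hdisj
      rw [hQ.2.2] at this
      have heq : ∑ Pj ∈ P, v ((Finset.univ : Finset α) ∩ Pj) = collVal v P := by
        unfold collVal
        exact Finset.sum_congr rfl fun Pj _ => by rw [Finset.univ_inter]
      linarith [heq ▸ this]
    linarith
end

section
/- (Convergence step of the merge-and-split theorem.) Suppose P is a strictly D_c-stable partition of N and Q is any partition of N with Q ≠ P. Then Q admits a value-increasing merge or split operation: either there exist two or more distinct blocks B_1, …, B_r of Q (r ≥ 2) with v(B_1 ∪ ⋯ ∪ B_r) > ∑_{j=1}^r v(B_j), or there exists a block B of Q and pairwise disjoint nonempty sets B_1, …, B_r (r ≥ 2) with B_1 ∪ ⋯ ∪ B_r = B and ∑_{j=1}^r v(B_j) > v(B). -/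
open Finset

variable {α : Type*} [Fintype α] [DecidableEq α]

/-- convergence step of merge-and-split: if `P` is strictly `D_c`-stable
and `Q ≠ P` is any partition of `N`, then `Q` admits a value-increasing merge operation
(two or more blocks of `Q` whose union has strictly larger value) or a value-increasing
split operation (a block of `Q` split into two or more pairwise disjoint nonempty sets
of strictly larger total value). -/
theorem strictlyDcStable_merge_or_split
    {α : Type*} [Fintype α] [DecidableEq α] [Nonempty α]
    (v : Finset α → ℝ) (hv0 : v ∅ = 0)
    (P : Finset (Finset α)) (hP : IsPartition P) (hstab : StrictlyDcStable v P)
    (Q : Finset (Finset α)) (hQ : IsPartition Q) (hne : Q ≠ P) :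
    (∃ T ⊆ Q, 2 ≤ T.card ∧ v (T.sup id) > ∑ B ∈ T, v B) ∨
      (∃ B ∈ Q, ∃ T : Finset (Finset α), IsCollection T ∧ 2 ≤ T.card ∧
        T.sup id = B ∧ (∑ B' ∈ T, v B') > v B) := by
  classical
  obtain ⟨hQne, hQdisj, hQsup⟩ := hQ
  obtain ⟨hPne, hPdisj, hPsup⟩ := hP
  -- uniqueness of P-block containing a point
  have huniq : ∀ {a : α} {Pj Pk : Finset α}, Pj ∈ P → Pk ∈ P → a ∈ Pj → a ∈ Pk → Pj = Pk := by
    intro a Pj Pk hj hk haj hak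
    by_contra hne'
    exact (Finset.disjoint_left.mp (hPdisj hj hk hne')) haj hak
  have hcover : ∀ a : α, ∃ Pj ∈ P, a ∈ Pj := by
    intro a
    have : a ∈ P.sup id := by rw [hPsup]; exact Finset.mem_univ a
    simpa [Finset.mem_sup] using this
  have hQcover : ∀ a : α, ∃ B ∈ Q, a ∈ B := by
    intro a
    have : a ∈ Q.sup id := by rw [hQsup]; exact Finset.mem_univ a
    simpa [Finset.mem_sup] using this
  by_cases h : ∀ B ∈ Q, ∃ Pj ∈ P, B ⊆ Pj
  · -- Q refines P : merge case
    left
    have hsupeq : ∀ Pj ∈ P, (Q.filter (· ⊆ Pj)).sup id = Pj := by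
      intro Pj hPj
      apply Finset.Subset.antisymm
      · intro a ha
        obtain ⟨C, hC, haC⟩ := Finset.mem_sup.mp ha
        exact (Finset.mem_filter.mp hC).2 haC
      · intro a ha
        obtain ⟨B, hB, haB⟩ := hQcover a
        obtain ⟨Pk, hPk, hBPk⟩ := h B hB
        have : Pj = Pk := huniq hPj hPk ha (hBPk haB)
        subst this
        exact Finset.mem_sup.mpr ⟨B, Finset.mem_filter.mpr ⟨hB, hBPk⟩, haB⟩
    by_cases h2 : ∃ Pj ∈ P, 2 ≤ (Q.filter (· ⊆ Pj)).card
    · obtain ⟨Pj, hPj, hcard⟩ := h2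
      refine ⟨Q.filter (· ⊆ Pj), Finset.filter_subset _ _, hcard, ?_⟩
      apply hstab.1
      · refine ⟨fun B hB => hQne B (Finset.mem_filter.mp hB).1, ?_⟩
        exact hQdisj.subset (by intro x hx; exact (Finset.mem_filter.mp hx).1)
      · exact hcard
      · refine ⟨Pj, hPj, ?_⟩
        intro a ha
        obtain ⟨C, hC, haC⟩ := Finset.mem_sup.mp ha
        exact (Finset.mem_filter.mp hC).2 haC
    · exfalso; apply hne
      push_neg at h2
      have hPQ : P ⊆ Q := by
        intro Pj hPj
        have hle : (Q.filter (· ⊆ Pj)).card ≤ 1 := by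
          have := h2 Pj hPj; omega
        have hnonempty : (Q.filter (· ⊆ Pj)).Nonempty := by
          obtain ⟨a, ha⟩ := hPne Pj hPj
          have : a ∈ (Q.filter (· ⊆ Pj)).sup id := by rw [hsupeq Pj hPj]; exact ha
          obtain ⟨B, hB, _⟩ := Finset.mem_sup.mp this
          exact ⟨B, hB⟩
        have hcard1 : (Q.filter (· ⊆ Pj)).card = 1 := le_antisymm hle
          (Finset.one_le_card.mpr hnonempty)
        obtain ⟨B, hBeq⟩ := Finset.card_eq_one.mp hcard1
        have hBQ : B ∈ Q := by
          have : B ∈ Q.filter (· ⊆ Pj) := by rw [hBeq]; exact Finset.mem_singleton_self B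
          exact (Finset.mem_filter.mp this).1
        have : B = Pj := by
          have := hsupeq Pj hPj
          rw [hBeq] at this
          simpa using this
        rwa [← this]
      apply Finset.Subset.antisymm _ hPQ
      intro B hB
      obtain ⟨Pj, hPj, hBPj⟩ := h B hB
      have hPjQ : Pj ∈ Q := hPQ hPj
      have : B = Pj := by
        by_contra hne'
        obtain ⟨a, ha⟩ := hQne B hB
        exact (Finset.disjoint_left.mp (hQdisj hB hPjQ hne')) ha (hBPj ha)
      rwa [this]
  · -- some block of Q is P-incompatible : split case
    right
    push_neg at h
    obtain ⟨B, hBQ, hB⟩ := h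
    set F : Finset (Finset α) := P.filter (fun Pj => (B ∩ Pj).Nonempty) with hF
    have hinj : Set.InjOn (fun Pj => B ∩ Pj) (F : Set (Finset α)) := by
      intro Pj hj Pk hk heq
      have hj' := Finset.mem_filter.mp hj
      have hk' := Finset.mem_filter.mp hk
      obtain ⟨a, ha⟩ := hj'.2
      have heq' : B ∩ Pj = B ∩ Pk := heq
      have ha' : a ∈ B ∩ Pk := by rw [← heq']; exact ha
      exact huniq hj'.1 hk'.1 (Finset.mem_inter.mp ha).2 (Finset.mem_inter.mp ha').2
    set T : Finset (Finset α) := F.image (fun Pj => B ∩ Pj) with hT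
    have hcardT : T.card = F.card := Finset.card_image_of_injOn hinj
    have hFcard : 2 ≤ F.card := by
      obtain ⟨a, ha⟩ := hQne B hBQ
      obtain ⟨Pj, hPj, haPj⟩ := hcover a
      obtain ⟨b, hb, hbPj⟩ := Finset.not_subset.mp (hB Pj hPj)
      obtain ⟨Pk, hPk, hbPk⟩ := hcover b
      have hjk : Pj ≠ Pk := fun e => hbPj (e ▸ hbPk)
      have h1 : Pj ∈ F := Finset.mem_filter.mpr ⟨hPj, ⟨a, Finset.mem_inter.mpr ⟨ha, haPj⟩⟩⟩
      have h2 : Pk ∈ F := Finset.mem_filter.mpr ⟨hPk, ⟨b, Finset.mem_inter.mpr ⟨hb, hbPk⟩⟩⟩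
      exact Finset.one_lt_card.mpr ⟨Pj, h1, Pk, h2, hjk⟩
    refine ⟨B, hBQ, T, ⟨?_, ?_⟩, hcardT ▸ hFcard, ?_, ?_⟩
    · intro C hC
      obtain ⟨Pj, hPj, rfl⟩ := Finset.mem_image.mp hC
      exact (Finset.mem_filter.mp hPj).2
    · intro C hC D hD hCD
      obtain ⟨Pj, hPj, rfl⟩ := Finset.mem_image.mp hC
      obtain ⟨Pk, hPk, rfl⟩ := Finset.mem_image.mp hD
      have hjk : Pj ≠ Pk := fun e => hCD (by rw [e])
      have hdisj := hPdisj (Finset.mem_filter.mp hPj).1 (Finset.mem_filter.mp hPk).1 hjk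
      simp only [Function.onFun, id_eq] at hdisj ⊢
      exact (hdisj.mono (Finset.inter_subset_right) (Finset.inter_subset_right))
    · apply Finset.Subset.antisymm
      · intro a ha
        obtain ⟨C, hC, haC⟩ := Finset.mem_sup.mp ha
        obtain ⟨Pj, _, rfl⟩ := Finset.mem_image.mp hC
        exact (Finset.mem_inter.mp haC).1
      · intro a ha
        obtain ⟨Pj, hPj, haPj⟩ := hcover a
        have hmem : B ∩ Pj ∈ T := Finset.mem_image.mpr ⟨Pj,
          Finset.mem_filter.mpr ⟨hPj, ⟨a, Finset.mem_inter.mpr ⟨ha, haPj⟩⟩⟩, rfl⟩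
        exact Finset.mem_sup.mpr ⟨B ∩ Pj, hmem, Finset.mem_inter.mpr ⟨ha, haPj⟩⟩
    · have hsum : (∑ B' ∈ T, v B') = ∑ Pj ∈ F, v (B ∩ Pj) :=
        Finset.sum_image fun x hx y hy => hinj hx hy
      rw [hsum]
      exact hstab.2 B hB
end
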